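/- Optimal recovery of a sum of positive integral operators in L¹ (ℓ¹-combined norm): For i = 1,…,l and j = 1,…,m, let (M'_j, ρ_j) be compact metric spaces with finite Borel measures μ_j, (N_i, ν_i) σ-finite measure spaces, and K_{ij} : N_i × M'_j → ℝ nonnegative ν_i×μ_j-integrable kernels defining integral operators A_{ij} x(y) := ∫_{M'_j} K_{ij}(y,t) x(t) dμ_j(t) into L¹(N_i,ν_i). For each j let ω_j be a modulus of continuity, Q_j ⊆ M'_j a finite set of n_j points, e_j ∈ [0,∞)^{n_j}, W_j := H^{ω_j}(M'_j), I_j := I_{Q_j}, U_j := U_{e_j}, τ_j := τ_{ω_j,Q_j,e_j}, and L_j := L_{ω_j,Q_j,e_j}. Let ψ be the ℓ¹-norm on ℝ^l and σ = diag(σ_1,…,σ_m) with σ_j ∈ {−1,1}. Then Φ := Ā σ L̄ with L̄ = diag(L_1,…,L_m) is an optimal method of recovery of Ā σ on W̄ = W_1×…×W_m based on information Ī with Ū-error, and E_ψ(Ā σ; W̄; Ī; Ū) = E_ψ(Ā σ; W̄; Ī; Ū; Φ) = Σ_{i=1}^l Σ_{j=1}^m ∫_{N_i} ∫_{M'_j}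 K_{ij}(y,t) τ_j(t) dμ_j(t) dν_i(y). -/

import Mathlib

open MeasureTheory
open scoped ENNReal

/-- The function `τ_{ω,Q,e}(t) = min_j (e_j + ω(ρ(t,q_j)))`. -/
noncomputable def tauOR {M : Type*} [MetricSpace M] (ω : ℝ → ℝ) {n : ℕ}
    (q : Fin n → M) (e : Fin n → ℝ) (t : M) : ℝ :=
  ⨅ j, (e j + ω (dist t (q j)))

/-- The method of recovery `L_{ω,Q,e}` built on the generalized Voronoi cells:
`L_{ω,Q,e} z` equals `z_j` on the cell `Π_j`. -/
noncomputable def LmethOR {M : Type*} [MetricSpace M] (ω : ℝ → ℝ) {n : ℕ}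
    (q : Fin n → M) (e : Fin n → ℝ) (z : Fin n → ℝ) (t : M) : ℝ :=
  haveI := Classical.dec
  if h : (Finset.univ.filter fun j => tauOR ω q e t = e j + ω (dist t (q j))).Nonempty
  then z ((Finset.univ.filter fun j => tauOR ω q e t = e j + ω (dist t (q j))).min' h)
  else 0

section helpers
variable {M : Type*} [MetricSpace M] {ω : ℝ → ℝ} {n : ℕ} {q : Fin n → M} {e : Fin n → ℝ}

lemma tauOR_le (t : M) (k : Fin n) : tauOR ω q e t ≤ e k + ω (dist t (q k)) :=
  ciInf_le (Set.Finite.bddBelow (Set.finite_range _)) k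

lemma tauOR_exists (hn : 0 < n) (t : M) : ∃ k, tauOR ω q e t = e k + ω (dist t (q k)) := by
  haveI : Nonempty (Fin n) := ⟨⟨0, hn⟩⟩
  obtain ⟨k, hk⟩ := exists_eq_ciInf_of_finite (f := fun k => e k + ω (dist t (q k)))
  exact ⟨k, hk.symm⟩

lemma tauOR_nonneg (he : ∀ k, 0 ≤ e k) (hω_nonneg : ∀ s, 0 ≤ s → 0 ≤ ω s)
    (hn : 0 < n) (t : M) : 0 ≤ tauOR ω q e t := by
  obtain ⟨k, hk⟩ := tauOR_exists hn t
  rw [hk]; exact add_nonneg (he k) (hω_nonneg _ dist_nonneg)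

lemma tauOR_at_q (hω0 : ω 0 = 0) (k : Fin n) : tauOR ω q e (q k) ≤ e k := by
  have := tauOR_le (ω := ω) (q := q) (e := e) (q k) k
  simpa [hω0] using this

lemma tauOR_lip (hmono : MonotoneOn ω (Set.Ici 0))
    (hsub : ∀ s t : ℝ, 0 ≤ s → 0 ≤ t → ω (s + t) ≤ ω s + ω t) (hn : 0 < n) (t t' : M) :
    |tauOR ω q e t - tauOR ω q e t'| ≤ ω (dist t t') := by
  have key : ∀ a b : M, tauOR ω q e a ≤ tauOR ω q e b + ω (dist a b) := by
    intro a b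
    obtain ⟨k, hk⟩ := tauOR_exists hn b
    have h1 : dist a (q k) ≤ dist a b + dist b (q k) := dist_triangle _ _ _
    have h2 : ω (dist a (q k)) ≤ ω (dist a b + dist b (q k)) :=
      hmono (Set.mem_Ici.2 dist_nonneg)
        (Set.mem_Ici.2 (add_nonneg dist_nonneg dist_nonneg)) h1
    have h3 := hsub (dist a b) (dist b (q k)) dist_nonneg dist_nonneg
    have h4 := tauOR_le a k (ω := ω) (e := e) (q := q)
    rw [hk]; linarith
  rw [abs_sub_le_iff]
  constructor
  · have := key t t'; linarith
  · have := key t' t; rw [dist_comm] at this; linarith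

lemma contOmegaDist (hω_cont : ContinuousOn ω (Set.Ici 0)) (c : M) :
    Continuous (fun t => ω (dist t c)) :=
  hω_cont.comp_continuous (continuous_id.dist continuous_const) fun _ => dist_nonneg

lemma tauOR_measurable [MeasurableSpace M] [BorelSpace M]
    (hω_cont : ContinuousOn ω (Set.Ici 0)) : Measurable (tauOR ω q e) :=
  Measurable.iInf fun k =>
    (continuous_const.add (contOmegaDist hω_cont (q k))).measurable

lemma LmethOR_measurable [MeasurableSpace M] [BorelSpace M]
    (hω_cont : ContinuousOn ω (Set.Ici 0)) (z : Fin n → ℝ) :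
    Measurable (LmethOR ω q e z) := by
  classical
  letI : MeasurableSpace (Finset (Fin n)) := ⊤
  haveI : MeasurableSingletonClass (Finset (Fin n)) := ⟨fun _ => trivial⟩
  have hτ : Measurable (tauOR ω q e) := tauOR_measurable hω_cont
  have hg : ∀ k : Fin n, Measurable fun t : M => e k + ω (dist t (q k)) :=
    fun k => (continuous_const.add (contOmegaDist hω_cont (q k))).measurable
  set F : M → Finset (Fin n) :=
    fun t => Finset.univ.filter fun j => tauOR ω q e t = e j + ω (dist t (q j)) with hF
  have hFmeas : Measurable F := by
    apply measurable_to_countable'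
    intro S
    have : F ⁻¹' {S} = ⋂ j, {t : M | (tauOR ω q e t = e j + ω (dist t (q j))) ↔ j ∈ S} := by
      ext t
      simp only [Set.mem_preimage, Set.mem_singleton_iff, Set.mem_iInter, Set.mem_setOf_eq,
        hF, Finset.ext_iff, Finset.mem_filter, Finset.mem_univ, true_and]
    rw [this]
    refine MeasurableSet.iInter fun j => ?_
    by_cases hj : j ∈ S
    · simp only [hj, iff_true]
      exact measurableSet_eq_fun hτ (hg j)
    · simp only [hj, iff_false]
      exact (measurableSet_eq_fun hτ (hg j)).compl
  have : LmethOR ω q e z = (fun S : Finset (Fin n) =>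
      if h : S.Nonempty then z (S.min' h) else 0) ∘ F := by
    funext t
    rw [LmethOR, Function.comp_apply]
    exact dite_congr rfl (fun _ => rfl) (fun _ => rfl)
  rw [this]
  exact (measurable_from_top).comp hFmeas

lemma abs_sub_LmethOR_le (hn : 0 < n) {x : M → ℝ}
    (hx : ∀ t t' : M, |x t - x t'| ≤ ω (dist t t')) {z : Fin n → ℝ}
    (hz : ∀ k, |z k - x (q k)| ≤ e k) (t : M) :
    |x t - LmethOR ω q e z t| ≤ tauOR ω q e t := by
  classical
  obtain ⟨k, hk⟩ := tauOR_exists (ω := ω) (q := q) (e := e) hn t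
  have hne : (Finset.univ.filter fun j =>
      tauOR ω q e t = e j + ω (dist t (q j))).Nonempty := ⟨k, by simp [hk]⟩
  rw [LmethOR, dif_pos hne]
  set j0 := (Finset.univ.filter fun j =>
      tauOR ω q e t = e j + ω (dist t (q j))).min' hne with hj0def
  have hj0 : tauOR ω q e t = e j0 + ω (dist t (q j0)) := by
    have := Finset.min'_mem _ hne
    simpa using this
  have h2 : |x (q j0) - z j0| ≤ e j0 := by rw [abs_sub_comm]; exact hz j0
  have h3 := hx t (q j0)
  calc |x t - z j0| ≤ |x t - x (q j0)| + |x (q j0) - z j0| := abs_sub_le _ _ _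
    _ ≤ ω (dist t (q j0)) + e j0 := add_le_add h3 h2
    _ = tauOR ω q e t := by rw [hj0]; ring

lemma abs_LmethOR_le (z : Fin n → ℝ) (t : M) :
    |LmethOR ω q e z t| ≤ ∑ k, |z k| := by
  classical
  rw [LmethOR]
  split
  · exact Finset.single_le_sum (f := fun k => |z k|) (fun k _ => abs_nonneg _)
      (Finset.mem_univ _)
  · simpa using Finset.sum_nonneg fun k (_ : k ∈ Finset.univ) => abs_nonneg (z k)

lemma exists_bound_of_lip [CompactSpace M] (hmono : MonotoneOn ω (Set.Ici 0))
    (t0 : M) {x : M → ℝ} (hx : ∀ t t' : M, |x t - x t'| ≤ ω (dist t t')) :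
    ∃ C, ∀ t, |x t| ≤ C := by
  obtain ⟨D, hD⟩ := Metric.isBounded_iff.1 ((isCompact_univ : IsCompact (Set.univ : Set M)).isBounded)
  refine ⟨|x t0| + ω (max D 0), fun t => ?_⟩
  have h1 : dist t t0 ≤ max D 0 :=
    le_trans (hD (Set.mem_univ t) (Set.mem_univ t0)) (le_max_left _ _)
  have h2 : ω (dist t t0) ≤ ω (max D 0) :=
    hmono (Set.mem_Ici.2 dist_nonneg) (Set.mem_Ici.2 (le_max_right _ _)) h1
  have h3 := hx t t0
  calc |x t| ≤ |x t0| + |x t - x t0| := by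
        have := abs_sub_abs_le_abs_sub (x t) (x t0); linarith [abs_nonneg (x t - x t0)]
    _ ≤ |x t0| + ω (max D 0) := by linarith
end helpers

/-- integrability of a nonnegative integrable kernel times a bounded measurable function -/
lemma integrable_kernel_mul {α β : Type*} [MeasurableSpace α] [MeasurableSpace β]
    {νa : Measure α} {μb : Measure β}
    {K : α → β → ℝ} (hK : Integrable (fun p : α × β => K p.1 p.2) (νa.prod μb))
    (hKpos : ∀ y t, 0 ≤ K y t)
    {c : β → ℝ} (hc : Measurable c) {C : ℝ} (hC : ∀ t, |c t| ≤ C) :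
    Integrable (fun p : α × β => K p.1 p.2 * c p.2) (νa.prod μb) := by
  refine Integrable.mono' (hK.const_mul C) ?_ ?_
  · exact hK.aestronglyMeasurable.mul (hc.comp measurable_snd).aestronglyMeasurable
  · refine Filter.Eventually.of_forall fun p => ?_
    rw [norm_mul, Real.norm_eq_abs, Real.norm_eq_abs, abs_of_nonneg (hKpos _ _)]
    calc K p.1 p.2 * |c p.2| ≤ K p.1 p.2 * C :=
          mul_le_mul_of_nonneg_left (hC _) (hKpos _ _)
      _ = C * K p.1 p.2 := mul_comm _ _

/-- Optimal recovery of a sum of positive integral operators in `L¹` with the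
`ℓ¹`-combined norm (Corollary 2 of the paper). -/
theorem optimal_recovery_sum_integral_operators_L1
    {l m : ℕ}
    (M : Fin m → Type*) [∀ j, MetricSpace (M j)] [∀ j, CompactSpace (M j)]
    [∀ j, MeasurableSpace (M j)] [∀ j, BorelSpace (M j)]
    (μ : ∀ j, Measure (M j)) [∀ j, IsFiniteMeasure (μ j)]
    (N : Fin l → Type*) [∀ i, MeasurableSpace (N i)]
    (ν : ∀ i, Measure (N i)) [∀ i, SigmaFinite (ν i)]
    (K : ∀ (i : Fin l) (j : Fin m), N i → M j → ℝ)
    (hK_nonneg : ∀ i j y t, 0 ≤ K i j y t)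
    (hK_int : ∀ i j, Integrable (fun p : N i × M j => K i j p.1 p.2) ((ν i).prod (μ j)))
    (ω : Fin m → ℝ → ℝ) (hω0 : ∀ j, ω j 0 = 0)
    (hω_cont : ∀ j, ContinuousOn (ω j) (Set.Ici 0))
    (hω_mono : ∀ j, MonotoneOn (ω j) (Set.Ici 0))
    (hω_subadd : ∀ j, ∀ s t : ℝ, 0 ≤ s → 0 ≤ t → ω j (s + t) ≤ ω j s + ω j t)
    (hω_nonneg : ∀ j, ∀ s : ℝ, 0 ≤ s → 0 ≤ ω j s)
    (n : Fin m → ℕ) (hn : ∀ j, 0 < n j)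
    (q : ∀ j, Fin (n j) → M j) (e : ∀ j, Fin (n j) → ℝ) (he : ∀ j k, 0 ≤ e j k)
    (σ : Fin m → ℝ) (hσ : ∀ j, σ j = 1 ∨ σ j = -1) :
    let A : ∀ (i : Fin l) (j : Fin m), (M j → ℝ) → N i → ℝ :=
      fun i j x y => ∫ t, K i j y t * x t ∂(μ j)
    let W : ∀ j, Set (M j → ℝ) := fun j =>
      {x | Measurable x ∧ ∀ t t' : M j, |x t - x t'| ≤ ω j (dist t t')}
    let τ : ∀ j, M j → ℝ := fun j => tauOR (ω j) (q j) (e j)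
    let Φ₀ : (∀ j, Fin (n j) → ℝ) → ∀ i, N i → ℝ :=
      fun z i y => ∑ j, σ j * A i j (LmethOR (ω j) (q j) (e j) (z j)) y
    let Err : ((∀ j, Fin (n j) → ℝ) → ∀ i, N i → ℝ) → ℝ≥0∞ := fun Φ =>
      ⨆ x : ∀ j, M j → ℝ, ⨆ (_ : ∀ j, x j ∈ W j), ⨆ z : ∀ j, Fin (n j) → ℝ,
        ⨆ (_ : ∀ j k, |z j k - x j (q j k)| ≤ e j k),
          ∑ i, eLpNorm (fun y => (∑ j, σ j * A i j (x j) y) - Φ z i y) 1 (ν i)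
    (⨅ Φ : {Φ : (∀ j, Fin (n j) → ℝ) → ∀ i, N i → ℝ // ∀ z i, MemLp (Φ z i) 1 (ν i)},
        Err Φ.1) = Err Φ₀ ∧
      Err Φ₀ = ∑ i, ∑ j, ∫⁻ y, ∫⁻ t, ENNReal.ofReal (K i j y t * τ j t) ∂(μ j) ∂(ν i) := by
  classical
  intro A W τ Φ₀ Err
  -- basic facts
  have hσ1 : ∀ j, |σ j| = 1 := fun j => by rcases hσ j with h | h <;> simp [h]
  have hσsq : ∀ j, σ j * σ j = 1 := fun j => by rcases hσ j with h | h <;> rw [h] <;> norm_num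
  have hτmeas : ∀ j, Measurable (τ j) := fun j => tauOR_measurable (hω_cont j)
  have hτnn : ∀ j t, 0 ≤ τ j t := fun j t =>
    tauOR_nonneg (he j) (hω_nonneg j) (hn j) t
  have hτlip : ∀ j (t t' : M j), |τ j t - τ j t'| ≤ ω j (dist t t') := fun j =>
    tauOR_lip (hω_mono j) (hω_subadd j) (hn j)
  have hτbd : ∀ j, ∃ C, ∀ t, |τ j t| ≤ C := fun j =>
    exists_bound_of_lip (hω_mono j) (q j ⟨0, hn j⟩) (hτlip j)
  -- integrability
  have hint : ∀ (i : Fin l) (j : Fin m) (c : M j → ℝ), Measurable c → (∃ C, ∀ t, |c t| ≤ C) →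
      Integrable (fun p : N i × M j => K i j p.1 p.2 * c p.2) ((ν i).prod (μ j)) := by
    intro i j c hc ⟨C, hC⟩
    exact integrable_kernel_mul (hK_int i j) (hK_nonneg i j) hc hC
  have hKτ : ∀ i j, Integrable (fun p : N i × M j => K i j p.1 p.2 * τ j p.2)
      ((ν i).prod (μ j)) := fun i j => hint i j (τ j) (hτmeas j) (hτbd j)
  -- the extremal function g
  set g : ∀ i : Fin l, N i → ℝ := fun i y => ∑ j, ∫ t, K i j y t * τ j t ∂(μ j) with hgdef
  have hgint : ∀ i, Integrable (g i) (ν i) := fun i =>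
    integrable_finset_sum _ fun j _ => (hKτ i j).integral_prod_left
  have hgnn : ∀ i y, 0 ≤ g i y := fun i y =>
    Finset.sum_nonneg fun j _ =>
      integral_nonneg fun t => mul_nonneg (hK_nonneg i j y t) (hτnn j t)
  -- identification of ∫⁻ ofReal (g i) with the double lintegral
  have hRyj : ∀ i j, (∫⁻ y, ENNReal.ofReal (∫ t, K i j y t * τ j t ∂(μ j)) ∂(ν i))
      = ∫⁻ y, ∫⁻ t, ENNReal.ofReal (K i j y t * τ j t) ∂(μ j) ∂(ν i) := by
    intro i j
    apply lintegral_congr_ae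
    filter_upwards [(hKτ i j).prod_right_ae] with y hy
    exact ofReal_integral_eq_lintegral_ofReal hy
      (Filter.Eventually.of_forall fun t => mul_nonneg (hK_nonneg i j y t) (hτnn j t))
  have hgnorm : ∀ i, eLpNorm (g i) 1 (ν i)
      = ∑ j, ∫⁻ y, ∫⁻ t, ENNReal.ofReal (K i j y t * τ j t) ∂(μ j) ∂(ν i) := by
    intro i
    rw [eLpNorm_one_eq_lintegral_enorm]
    calc (∫⁻ y, ‖g i y‖ₑ ∂(ν i))
        = ∫⁻ y, ∑ j, ENNReal.ofReal (∫ t, K i j y t * τ j t ∂(μ j)) ∂(ν i) := by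
          apply lintegral_congr; intro y
          rw [Real.enorm_eq_ofReal (hgnn i y), hgdef]
          exact ENNReal.ofReal_sum_of_nonneg fun j _ =>
            integral_nonneg fun t => mul_nonneg (hK_nonneg i j y t) (hτnn j t)
      _ = ∑ j, ∫⁻ y, ENNReal.ofReal (∫ t, K i j y t * τ j t ∂(μ j)) ∂(ν i) :=
          lintegral_finset_sum' _ fun j _ =>
            ENNReal.measurable_ofReal.comp_aemeasurable
              ((hKτ i j).integral_prod_left.aestronglyMeasurable.aemeasurable)
      _ = _ := Finset.sum_congr rfl fun j _ => hRyj i j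
  -- Φ₀ is admissible
  have hΦ₀mem : ∀ z i, MemLp (Φ₀ z i) 1 (ν i) := by
    intro z i
    rw [memLp_one_iff_integrable]
    refine integrable_finset_sum _ fun j _ => Integrable.const_mul ?_ (σ j)
    exact (hint i j (LmethOR (ω j) (q j) (e j) (z j)) (LmethOR_measurable (hω_cont j) (z j))
      ⟨∑ k, |z j k|, abs_LmethOR_le (z j)⟩).integral_prod_left
  -- lower bound for an arbitrary admissible method
  have hlow : ∀ Φ : (∀ j, Fin (n j) → ℝ) → ∀ i, N i → ℝ,
      (∀ z i, MemLp (Φ z i) 1 (ν i)) → (∑ i, eLpNorm (g i) 1 (ν i)) ≤ Err Φ := by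
    intro Φ hΦ
    set xp : ∀ j, M j → ℝ := fun j t => σ j * τ j t with hxpdef
    have hxpW : ∀ j, xp j ∈ W j := by
      intro j
      refine ⟨measurable_const.mul (hτmeas j), fun t t' => ?_⟩
      have h : xp j t - xp j t' = σ j * (τ j t - τ j t') := by simp only [hxpdef]; ring
      rw [h, abs_mul, hσ1 j, one_mul]; exact hτlip j t t'
    have hxmW : ∀ j, (fun t => -xp j t) ∈ W j := by
      intro j
      refine ⟨(measurable_const.mul (hτmeas j)).neg, fun t t' => ?_⟩
      have h : -xp j t - -xp j t' = -(σ j * (τ j t - τ j t')) := by simp only [hxpdef]; ring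
      rw [h, abs_neg, abs_mul, hσ1 j, one_mul]; exact hτlip j t t'
    have hz0p : ∀ j k, |(fun j => fun _ : Fin (n j) => (0:ℝ)) j k - xp j (q j k)| ≤ e j k := by
      intro j k
      simp only [zero_sub, abs_neg, hxpdef, abs_mul, hσ1 j, one_mul,
        abs_of_nonneg (hτnn j (q j k))]
      exact tauOR_at_q (hω0 j) k
    have hz0m : ∀ j k, |(fun j => fun _ : Fin (n j) => (0:ℝ)) j k - (fun t => -xp j t) (q j k)| ≤ e j k := by
      intro j k
      simp only [zero_sub, neg_neg, hxpdef, abs_mul, hσ1 j, one_mul,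
        abs_of_nonneg (hτnn j (q j k))]
      exact tauOR_at_q (hω0 j) k
    have hApg : ∀ i y, (∑ j, σ j * A i j (xp j) y) = g i y := by
      intro i y
      refine Finset.sum_congr rfl fun j _ => ?_
      have h1 : A i j (xp j) y = σ j * ∫ t, K i j y t * τ j t ∂(μ j) := by
        simp only [A, hxpdef]
        rw [← integral_const_mul]
        congr 1; funext t; ring
      rw [h1, ← mul_assoc, hσsq j, one_mul]
    have hAmg : ∀ i y, (∑ j, σ j * A i j (fun t => -xp j t) y) = -g i y := by
      intro i y
      rw [hgdef, ← Finset.sum_neg_distrib]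
      refine Finset.sum_congr rfl fun j _ => ?_
      have h1 : A i j (fun t => -xp j t) y = -(σ j * ∫ t, K i j y t * τ j t ∂(μ j)) := by
        simp only [A, hxpdef]
        rw [← integral_const_mul, ← integral_neg]
        congr 1; funext t; ring
      rw [h1, mul_neg, ← mul_assoc, hσsq j, one_mul]
    -- the two admissible pairs give lower bounds
    have h1 : (∑ i, eLpNorm (fun y => g i y - Φ (fun j _ => 0) i y) 1 (ν i)) ≤ Err Φ := by
      simp only [Err]
      refine le_iSup_of_le xp (le_iSup_of_le hxpW (le_iSup_of_le (fun j _ => 0)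
        (le_iSup_of_le hz0p (le_of_eq ?_))))
      refine Finset.sum_congr rfl fun i _ => ?_
      congr 1; funext y; rw [hApg i y]
    have h2 : (∑ i, eLpNorm (fun y => -g i y - Φ (fun j _ => 0) i y) 1 (ν i)) ≤ Err Φ := by
      simp only [Err]
      refine le_iSup_of_le (fun j => fun t => -xp j t) (le_iSup_of_le hxmW
        (le_iSup_of_le (fun j _ => 0) (le_iSup_of_le hz0m (le_of_eq ?_))))
      refine Finset.sum_congr rfl fun i _ => ?_
      congr 1; funext y; rw [hAmg i y]
    -- triangle inequality
    have hkey : ∀ i, 2 * eLpNorm (g i) 1 (ν i)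
        ≤ eLpNorm (fun y => g i y - Φ (fun j _ => 0) i y) 1 (ν i)
          + eLpNorm (fun y => -g i y - Φ (fun j _ => 0) i y) 1 (ν i) := by
      intro i
      have hgm : AEStronglyMeasurable (g i) (ν i) := (hgint i).aestronglyMeasurable
      have hΦm : AEStronglyMeasurable (Φ (fun j _ => 0) i) (ν i) :=
        (hΦ (fun j _ => 0) i).aestronglyMeasurable
      have htri := eLpNorm_sub_le (p := 1) (μ := ν i)
        (f := fun y => g i y - Φ (fun j _ => 0) i y)
        (g := fun y => -g i y - Φ (fun j _ => 0) i y)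
        (hgm.sub hΦm) (hgm.neg.sub hΦm) le_rfl
      have hfun : ((fun y => g i y - Φ (fun j _ => 0) i y)
          - fun y => -g i y - Φ (fun j _ => 0) i y) = fun y => (2:ℝ) * g i y := by
        funext y; simp only [Pi.sub_apply]; ring
      rw [hfun] at htri
      refine le_trans (le_of_eq ?_) htri
      rw [eLpNorm_one_eq_lintegral_enorm, eLpNorm_one_eq_lintegral_enorm,
        ← lintegral_const_mul' 2 _ (by norm_num)]
      apply lintegral_congr; intro y
      rw [enorm_mul, Real.enorm_eq_ofReal (by norm_num : (0:ℝ) ≤ 2)]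
      norm_num
    have hsum : 2 * (∑ i, eLpNorm (g i) 1 (ν i)) ≤ 2 * Err Φ := by
      rw [Finset.mul_sum]
      calc (∑ i, 2 * eLpNorm (g i) 1 (ν i))
          ≤ ∑ i, (eLpNorm (fun y => g i y - Φ (fun j _ => 0) i y) 1 (ν i)
            + eLpNorm (fun y => -g i y - Φ (fun j _ => 0) i y) 1 (ν i)) :=
            Finset.sum_le_sum fun i _ => hkey i
        _ = (∑ i, eLpNorm (fun y => g i y - Φ (fun j _ => 0) i y) 1 (ν i))
            + ∑ i, eLpNorm (fun y => -g i y - Φ (fun j _ => 0) i y) 1 (ν i) :=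
            Finset.sum_add_distrib
        _ ≤ Err Φ + Err Φ := add_le_add h1 h2
        _ = 2 * Err Φ := (two_mul _).symm
    exact (ENNReal.mul_le_mul_iff_right (by norm_num) ENNReal.ofNat_ne_top).1 hsum
  -- upper bound for the method Φ₀
  have hup : Err Φ₀ ≤ ∑ i, eLpNorm (g i) 1 (ν i) := by
    simp only [Err]
    refine iSup_le fun x => iSup_le fun hx => iSup_le fun z => iSup_le fun hz => ?_
    refine Finset.sum_le_sum fun i _ => ?_
    rw [eLpNorm_one_eq_lintegral_enorm, eLpNorm_one_eq_lintegral_enorm]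
    apply lintegral_mono_ae
    have hxbd : ∀ j, ∃ C, ∀ t, |x j t| ≤ C := fun j =>
      exists_bound_of_lip (hω_mono j) (q j ⟨0, hn j⟩) (hx j).2
    have hLint : ∀ j, Integrable
        (fun p : N i × M j => K i j p.1 p.2 * LmethOR (ω j) (q j) (e j) (z j) p.2)
        ((ν i).prod (μ j)) := fun j =>
      hint i j _ (LmethOR_measurable (hω_cont j) (z j)) ⟨∑ k, |z j k|, abs_LmethOR_le (z j)⟩
    have hxint : ∀ j, Integrable (fun p : N i × M j => K i j p.1 p.2 * x j p.2)
        ((ν i).prod (μ j)) := fun j => hint i j _ (hx j).1 (hxbd j)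
    filter_upwards [ae_all_iff.2 fun j => (hxint j).prod_right_ae,
      ae_all_iff.2 fun j => (hLint j).prod_right_ae,
      ae_all_iff.2 fun j => (hKτ i j).prod_right_ae] with y hy1 hy2 hy3
    have hstep : (∑ j, σ j * A i j (x j) y) - Φ₀ z i y
        = ∑ j, σ j * ∫ t,
            (K i j y t * x j t - K i j y t * LmethOR (ω j) (q j) (e j) (z j) t) ∂(μ j) := by
      have hΦ0 : Φ₀ z i y
          = ∑ j, σ j * ∫ t, K i j y t * LmethOR (ω j) (q j) (e j) (z j) t ∂(μ j) := rfl
      rw [hΦ0, ← Finset.sum_sub_distrib]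
      refine Finset.sum_congr rfl fun j _ => ?_
      simp only [A]
      rw [← mul_sub, ← integral_sub (hy1 j) (hy2 j)]
    have habs : |(∑ j, σ j * A i j (x j) y) - Φ₀ z i y| ≤ g i y := by
      rw [hstep, hgdef]
      calc |∑ j, σ j * ∫ t,
              (K i j y t * x j t - K i j y t * LmethOR (ω j) (q j) (e j) (z j) t) ∂(μ j)|
          ≤ ∑ j, |σ j * ∫ t,
              (K i j y t * x j t - K i j y t * LmethOR (ω j) (q j) (e j) (z j) t) ∂(μ j)| :=
            Finset.abs_sum_le_sum_abs _ _
        _ ≤ ∑ j, ∫ t, K i j y t * τ j t ∂(μ j) := by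
            refine Finset.sum_le_sum fun j _ => ?_
            rw [abs_mul, hσ1 j, one_mul]
            have hptw : ∀ t, |K i j y t * x j t
                - K i j y t * LmethOR (ω j) (q j) (e j) (z j) t| ≤ K i j y t * τ j t := by
              intro t
              rw [← mul_sub, abs_mul, abs_of_nonneg (hK_nonneg i j y t)]
              exact mul_le_mul_of_nonneg_left
                (abs_sub_LmethOR_le (hn j) (hx j).2 (hz j) t) (hK_nonneg i j y t)
            calc |∫ t, (K i j y t * x j t
                    - K i j y t * LmethOR (ω j) (q j) (e j) (z j) t) ∂(μ j)|
                ≤ ∫ t, |K i j y t * x j t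
                    - K i j y t * LmethOR (ω j) (q j) (e j) (z j) t| ∂(μ j) := by
                  have := norm_integral_le_integral_norm (μ := μ j)
                    (f := fun t => K i j y t * x j t
                      - K i j y t * LmethOR (ω j) (q j) (e j) (z j) t)
                  simpa [Real.norm_eq_abs] using this
              _ ≤ ∫ t, K i j y t * τ j t ∂(μ j) :=
                  integral_mono ((hy1 j).sub (hy2 j)).abs (hy3 j) fun t => hptw t
    calc ‖(∑ j, σ j * A i j (x j) y) - Φ₀ z i y‖ₑ
        = ENNReal.ofReal |(∑ j, σ j * A i j (x j) y) - Φ₀ z i y| := by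
          rw [← ofReal_norm_eq_enorm, Real.norm_eq_abs]
      _ ≤ ENNReal.ofReal (g i y) := ENNReal.ofReal_le_ofReal habs
      _ = ‖g i y‖ₑ := (Real.enorm_eq_ofReal (hgnn i y)).symm
  -- conclusion
  have hErr₀ : Err Φ₀ = ∑ i, eLpNorm (g i) 1 (ν i) := le_antisymm hup (hlow Φ₀ hΦ₀mem)
  constructor
  · refine le_antisymm (iInf_le_of_le ⟨Φ₀, hΦ₀mem⟩ le_rfl) (le_iInf fun Φ => ?_)
    rw [hErr₀]
    exact hlow Φ.1 Φ.2
  · rw [hErr₀]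
    exact Finset.sum_congr rfl fun i _ => hgnorm i
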